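/- Let (X,d) be a compact metric space and T : X → X a continuous, open, expanding single-valued map (there exist λ > 1, η > 0 with d(Tx,Ty) ≥ λ d(x,y) whenever d(x,y) ≤ η). For every α ∈ (0,1] and every α-Hölder f : X → ℝ, there exists an α-Hölder v : X → ℝ such that f(x) + v(x) − v(T(x)) ≤ β(f) for all x ∈ X, where β(f) = sup{∫ f dμ : μ a T-invariant Borel probability measure}. -/

import Mathlib

open MeasureTheory Metric Function Finset Filter
open scoped ENNReal NNReal

private lemma mane_rpow_subadd {p : ℝ} (hp : 0 ≤ p) (hp1 : p ≤ 1) {a b : ℝ}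
    (ha : 0 ≤ a) (hb : 0 ≤ b) : (a + b) ^ p ≤ a ^ p + b ^ p := by
  have h := NNReal.rpow_add_le_add_rpow (a.toNNReal) (b.toNNReal) hp hp1
  have h2 := NNReal.coe_le_coe.2 h
  push_cast at h2
  rw [Real.coe_toNNReal a ha, Real.coe_toNNReal b hb] at h2
  convert h2 using 2

private lemma mane_rpow_tri {p : ℝ} (hp : 0 ≤ p) (hp1 : p ≤ 1) (x y z : ℝ)
    (hx : 0 ≤ x) (hy : 0 ≤ y) (h : z ≤ x + y) (hz : 0 ≤ z) :
    z ^ p ≤ x ^ p + y ^ p :=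
  le_trans (Real.rpow_le_rpow hz h hp) (mane_rpow_subadd hp hp1 hx hy)

private lemma mane_geom_sum {s : ℝ} (hs0 : 0 ≤ s) (hs1 : s < 1) (m : ℕ) :
    ∑ k ∈ Finset.range m, s ^ k ≤ (1 - s)⁻¹ := by
  have := Summable.sum_le_tsum (Finset.range m) (fun i _ => pow_nonneg hs0 i)
    (summable_geometric_of_lt_one hs0 hs1)
  rwa [tsum_geometric_of_lt_one hs0 hs1] at this

private lemma mane_geom_tail {s : ℝ} (hs0 : 0 ≤ s) (hs1 : s < 1) (m : ℕ) :
    ∑ k ∈ Finset.range m, s ^ (m - k) ≤ s * (1 - s)⁻¹ := by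
  have h1 : ∑ k ∈ Finset.range m, s ^ (m - k) = ∑ k ∈ Finset.range m, s ^ (k + 1) := by
    rw [← Finset.sum_range_reflect]
    apply Finset.sum_congr rfl
    intro k hk
    simp only [Finset.mem_range] at hk
    congr 1
    omega
  rw [h1]
  have h2 : ∑ k ∈ Finset.range m, s ^ (k + 1) = s * ∑ k ∈ Finset.range m, s ^ k := by
    rw [Finset.mul_sum]
    apply Finset.sum_congr rfl
    intro k _
    ring
  rw [h2]
  exact mul_le_mul_of_nonneg_left (mane_geom_sum hs0 hs1 m) hs0

set_option maxHeartbeats 2000000 in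
theorem stmt19 {X : Type*} [MetricSpace X] [CompactSpace X]
    [MeasurableSpace X] [BorelSpace X] (T : X → X)
    (hcont : Continuous T)
    (hopen : IsOpenMap T)
    (hexp : ∃ lam > (1 : ℝ), ∃ η > (0 : ℝ), ∀ x y : X, dist x y ≤ η →
      lam * dist x y ≤ dist (T x) (T y))
    (α : ℝ) (hα : 0 < α) (hα1 : α ≤ 1) (f : X → ℝ)
    (hf : ∃ K > (0 : ℝ), ∀ x y : X, |f x - f y| ≤ K * dist x y ^ α) :
    ∃ v : X → ℝ, (∃ K > (0 : ℝ), ∀ x y : X, |v x - v y| ≤ K * dist x y ^ α) ∧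
      ∀ x : X,
        f x + v x - v (T x) ≤ sSup {r : ℝ | ∃ μ : Measure X, IsProbabilityMeasure μ ∧
          (∀ A : Set X, MeasurableSet A → μ (T ⁻¹' A) = μ A) ∧
          (∫ z, f z ∂μ) = r} := by
  classical
  obtain ⟨lam, hlam, η, hη, hexp⟩ := hexp
  obtain ⟨K, hK, hfK⟩ := hf
  set S : Set ℝ := {r : ℝ | ∃ μ : Measure X, IsProbabilityMeasure μ ∧
      (∀ A : Set X, MeasurableSet A → μ (T ⁻¹' A) = μ A) ∧
      (∫ z, f z ∂μ) = r} with hSdef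
  set βs : ℝ := sSup S with hβsdef
  -- trivial case: X empty
  rcases isEmpty_or_nonempty X with hE | hNE
  · refine ⟨fun _ => 0, ⟨1, one_pos, fun x y => ?_⟩, fun x => (hE.false x).elim⟩
    simp only [sub_self, abs_zero, one_mul]
    exact Real.rpow_nonneg dist_nonneg α
  -- basic facts
  have hlam0 : (0:ℝ) < lam := lt_trans one_pos hlam
  have hinv0 : (0:ℝ) < lam⁻¹ := inv_pos.2 hlam0
  have hinv1 : lam⁻¹ < 1 := inv_lt_one_of_one_lt₀ hlam
  -- continuity of f
  have hfc : Continuous f := by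
    rw [Metric.continuous_iff]
    intro x ε hε
    refine ⟨(ε / (K + 1)) ^ α⁻¹, Real.rpow_pos_of_pos (by positivity) _, fun y hy => ?_⟩
    have h1 : dist y x ^ α < ((ε / (K + 1)) ^ α⁻¹) ^ α :=
      Real.rpow_lt_rpow dist_nonneg hy hα
    rw [← Real.rpow_mul (by positivity), inv_mul_cancel₀ (ne_of_gt hα), Real.rpow_one] at h1
    rw [Real.dist_eq]
    calc |f y - f x| ≤ K * dist y x ^ α := hfK y x
      _ < K * (ε / (K + 1)) := mul_lt_mul_of_pos_left h1 hK
      _ < ε := by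
          rw [mul_div_assoc', div_lt_iff₀ (by linarith)]
          nlinarith
  -- maximum of f
  obtain ⟨xM, -, hxM'⟩ := isCompact_univ.exists_isMaxOn Set.univ_nonempty hfc.continuousOn
  set Mf : ℝ := f xM with hMfdef
  have hMf : ∀ y, f y ≤ Mf := fun y => hxM' (Set.mem_univ y)
  -- bound on ‖f‖
  obtain ⟨xB, -, hxB'⟩ := isCompact_univ.exists_isMaxOn Set.univ_nonempty
    (continuous_norm.comp hfc).continuousOn
  set Bf : ℝ := ‖f xB‖ with hBfdef
  have hBf : ∀ y, ‖f y‖ ≤ Bf := fun y => hxB' (Set.mem_univ y)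
  -- f is integrable w.r.t. any finite measure
  have hfint : ∀ (μ : Measure X) [IsFiniteMeasure μ], Integrable f μ := by
    intro μ hμ
    refine Integrable.mono' (integrable_const Bf) hfc.aestronglyMeasurable ?_
    exact Eventually.of_forall hBf
  -- S is bounded above by Mf
  have hSbdd : BddAbove S := by
    refine ⟨Mf, fun r hr => ?_⟩
    obtain ⟨μ, hprob, -, hint⟩ := hr
    rw [← hint]
    calc ∫ z, f z ∂μ ≤ ∫ _, Mf ∂μ := integral_mono (hfint μ) (integrable_const Mf) hMf
      _ = Mf := by simp [measure_univ]
  ----------------------------------------------------------------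
  -- L1 : uniform branch lemma
  ----------------------------------------------------------------
  have hbranch0 : ∃ ε1 > (0:ℝ), ∀ x z : X, dist (T x) z ≤ ε1 →
      z ∈ T '' (closedBall x (η/2)) := by
    by_contra hcon
    push_neg at hcon
    have hseq : ∀ k : ℕ, ∃ xz : X × X, dist (T xz.1) xz.2 ≤ 1/(k+1) ∧
        xz.2 ∉ T '' (closedBall xz.1 (η/2)) := by
      intro k
      obtain ⟨x, z, h1, h2⟩ := hcon (1/(k+1)) (by positivity)
      exact ⟨(x, z), h1, h2⟩
    choose u hu1 hu2 using hseq
    obtain ⟨xb, φ, hφ, hconv⟩ := CompactSpace.tendsto_subseq (fun k => (u k).1)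
    have hz : Tendsto (fun k => (u (φ k)).2) atTop (nhds (T xb)) := by
      rw [tendsto_iff_dist_tendsto_zero]
      have hb : ∀ k, dist ((u (φ k)).2) (T xb) ≤
          1/((φ k : ℝ) + 1) + dist (T ((u (φ k)).1)) (T xb) := by
        intro k
        have h0 := hu1 (φ k)
        calc dist ((u (φ k)).2) (T xb)
            ≤ dist ((u (φ k)).2) (T ((u (φ k)).1)) + dist (T ((u (φ k)).1)) (T xb) :=
              dist_triangle _ _ _
          _ ≤ 1/((φ k : ℝ) + 1) + dist (T ((u (φ k)).1)) (T xb) := by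
              rw [dist_comm ((u (φ k)).2)]
              exact add_le_add (by exact_mod_cast h0) (le_refl _)
      have h1 : Tendsto (fun k => 1/((φ k : ℝ) + 1)) atTop (nhds 0) :=
        tendsto_one_div_add_atTop_nhds_zero_nat.comp hφ.tendsto_atTop
      have h2 : Tendsto (fun k => dist (T ((u (φ k)).1)) (T xb)) atTop (nhds 0) := by
        have h3 : Tendsto (fun k => T ((u (φ k)).1)) atTop (nhds (T xb)) :=
          (hcont.tendsto xb).comp hconv
        rwa [tendsto_iff_dist_tendsto_zero] at h3
      have h3 : Tendsto (fun k => 1/((φ k : ℝ) + 1) + dist (T ((u (φ k)).1)) (T xb))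
          atTop (nhds 0) := by
        have h4 := h1.add h2
        simpa using h4
      exact squeeze_zero (fun k => dist_nonneg) hb h3
    have hV : IsOpen (T '' (ball xb (η/4))) := hopen _ isOpen_ball
    have hTxb : T xb ∈ T '' (ball xb (η/4)) :=
      ⟨xb, mem_ball_self (by linarith), rfl⟩
    have hev1 : ∀ᶠ k in atTop, (u (φ k)).2 ∈ T '' (ball xb (η/4)) :=
      hz.eventually (hV.mem_nhds hTxb)
    have hev2 : ∀ᶠ k in atTop, dist ((u (φ k)).1) xb < η/4 :=
      Metric.tendsto_nhds.1 hconv (η/4) (by linarith)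
    obtain ⟨k, hk1, hk2⟩ := (hev1.and hev2).exists
    obtain ⟨w, hw1, hw2⟩ := hk1
    refine hu2 (φ k) ⟨w, ?_, hw2⟩
    rw [mem_closedBall]
    rw [mem_ball] at hw1
    calc dist w ((u (φ k)).1) ≤ dist w xb + dist xb ((u (φ k)).1) := dist_triangle _ _ _
      _ ≤ η/4 + η/4 := by
          rw [dist_comm xb]
          exact add_le_add (le_of_lt hw1) (le_of_lt hk2)
      _ = η/2 := by ring
  obtain ⟨ε1, hε1, hbr⟩ := hbranch0
  set ε0 : ℝ := min ε1 (η/2) with hε0def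
  have hε0 : 0 < ε0 := lt_min hε1 (by linarith)
  have hε0η : ε0 ≤ η/2 := min_le_right _ _
  have hbranch : ∀ x z : X, dist (T x) z ≤ ε0 → ∃ y, T y = z ∧
      dist x y ≤ lam⁻¹ * dist (T x) z := by
    intro x z hxz
    obtain ⟨y, hy1, hy2⟩ := hbr x z (le_trans hxz (min_le_left _ _))
    rw [mem_closedBall] at hy1
    refine ⟨y, hy2, ?_⟩
    have hd : dist x y ≤ η := by rw [dist_comm]; linarith
    have h1 := hexp x y hd
    rw [hy2] at h1
    rw [inv_mul_eq_div, le_div_iff₀ hlam0]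
    linarith
  ----------------------------------------------------------------
  -- L2 : pullback of orbit segments
  ----------------------------------------------------------------
  have hpull : ∀ (n : ℕ) (z y : X), dist (T^[n] z) y ≤ ε0 →
      ∃ w, T^[n] w = y ∧ ∀ k, k ≤ n →
        dist (T^[k] w) (T^[k] z) ≤ lam⁻¹ ^ (n - k) * dist (T^[n] z) y := by
    intro n
    induction n with
    | zero =>
      intro z y hzy
      refine ⟨y, rfl, fun k hk => ?_⟩
      have hk0 : k = 0 := by omega
      subst hk0
      simp [dist_comm]
    | succ n ih =>
      intro z y hzy
      have h1 : dist (T (T^[n] z)) y ≤ ε0 := by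
        rwa [Function.iterate_succ_apply'] at hzy
      obtain ⟨y1, hy1, hy2⟩ := hbranch (T^[n] z) y h1
      have hy1' : dist (T^[n] z) y1 ≤ ε0 := by
        calc dist (T^[n] z) y1 ≤ lam⁻¹ * dist (T (T^[n] z)) y := hy2
          _ ≤ 1 * ε0 := mul_le_mul (le_of_lt hinv1) h1 dist_nonneg zero_le_one
          _ = ε0 := one_mul _
      obtain ⟨w, hw1, hw2⟩ := ih z y1 hy1'
      have hwn : T^[n+1] w = y := by rw [Function.iterate_succ_apply', hw1, hy1]
      refine ⟨w, hwn, fun k hk => ?_⟩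
      rcases Nat.lt_or_ge k (n+1) with hk' | hk'
      · have hkn : k ≤ n := by omega
        calc dist (T^[k] w) (T^[k] z) ≤ lam⁻¹ ^ (n - k) * dist (T^[n] z) y1 := hw2 k hkn
          _ ≤ lam⁻¹ ^ (n - k) * (lam⁻¹ * dist (T (T^[n] z)) y) :=
              mul_le_mul_of_nonneg_left hy2 (by positivity)
          _ = lam⁻¹ ^ (n + 1 - k) * dist (T (T^[n] z)) y := by
              rw [show n + 1 - k = (n - k) + 1 by omega]
              ring
          _ = lam⁻¹ ^ (n + 1 - k) * dist (T^[n+1] z) y := by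
              rw [Function.iterate_succ_apply']
      · have hk2 : k = n + 1 := by omega
        subst hk2
        rw [hwn, show n + 1 - (n+1) = 0 by omega, pow_zero, one_mul, dist_comm]
  ----------------------------------------------------------------
  -- BE : backward expansion estimate
  ----------------------------------------------------------------
  have hBE : ∀ (a b : X) (m : ℕ), (∀ k, k ≤ m → dist (T^[k] a) (T^[k] b) ≤ η) →
      ∀ i k, k + i = m → dist (T^[k] a) (T^[k] b) ≤ lam⁻¹ ^ i * dist (T^[m] a) (T^[m] b) := by
    intro a b m hsmall i
    induction i with
    | zero =>
      intro k hk
      have hkm : k = m := by omega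
      subst hkm
      simp
    | succ i ih =>
      intro k hk
      have h1 : dist (T^[k] a) (T^[k] b) ≤ η := hsmall k (by omega)
      have h2 := hexp (T^[k] a) (T^[k] b) h1
      rw [← Function.iterate_succ_apply' T k a, ← Function.iterate_succ_apply' T k b] at h2
      have h3 := ih (k+1) (by omega)
      have h4 : dist (T^[k] a) (T^[k] b) ≤ lam⁻¹ * dist (T^[k+1] a) (T^[k+1] b) := by
        rw [inv_mul_eq_div, le_div_iff₀ hlam0]
        linarith
      calc dist (T^[k] a) (T^[k] b) ≤ lam⁻¹ * dist (T^[k+1] a) (T^[k+1] b) := h4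
        _ ≤ lam⁻¹ * (lam⁻¹ ^ i * dist (T^[m] a) (T^[m] b)) :=
            mul_le_mul_of_nonneg_left h3 (le_of_lt hinv0)
        _ = lam⁻¹ ^ (i+1) * dist (T^[m] a) (T^[m] b) := by ring
  ----------------------------------------------------------------
  -- L3 : closing lemma
  ----------------------------------------------------------------
  set ρ : ℝ := ε0 * (1 - lam⁻¹) with hρdef
  have hρ0 : 0 < ρ := mul_pos hε0 (by linarith)
  have hρε0 : ρ ≤ ε0 := by nlinarith
  have hclose : ∀ (m : ℕ), 1 ≤ m → ∀ z : X, dist (T^[m] z) z ≤ ρ →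
      ∃ p, T^[m] p = p ∧ ∀ k, k < m → dist (T^[k] p) (T^[k] z) ≤ lam⁻¹ ^ (m - k) * ε0 := by
    intro m hm z hmz
    have hinvm : lam⁻¹ ^ m ≤ lam⁻¹ := by
      calc lam⁻¹ ^ m ≤ lam⁻¹ ^ 1 :=
        pow_le_pow_of_le_one (le_of_lt hinv0) (le_of_lt hinv1) hm
      _ = lam⁻¹ := pow_one _
    set P : X → Prop := fun y => dist (T^[m] z) y ≤ ε0 with hPdef
    have hPz : P z := le_trans hmz hρε0
    set pf : X → X := fun y => if h : P y then (hpull m z y h).choose else z with hpfdef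
    have hstep : ∀ y, P y → (T^[m] (pf y) = y ∧
        ∀ k, k ≤ m → dist (T^[k] (pf y)) (T^[k] z) ≤ lam⁻¹ ^ (m - k) * ε0) := by
      intro y hy
      have hpfy : pf y = (hpull m z y hy).choose := by
        rw [hpfdef]
        simp only [hy, dif_pos]
      obtain ⟨h1, h2⟩ := (hpull m z y hy).choose_spec
      rw [hpfy]
      refine ⟨h1, fun k hk => ?_⟩
      calc dist (T^[k] (hpull m z y hy).choose) (T^[k] z)
          ≤ lam⁻¹ ^ (m - k) * dist (T^[m] z) y := h2 k hk
        _ ≤ lam⁻¹ ^ (m - k) * ε0 := mul_le_mul_of_nonneg_left hy (by positivity)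
    have hPstep : ∀ y, P y → P (pf y) := by
      intro y hy
      obtain ⟨-, h2⟩ := hstep y hy
      have h3 : dist (T^[0] (pf y)) (T^[0] z) ≤ lam⁻¹ ^ (m - 0) * ε0 := h2 0 (by omega)
      simp only [Function.iterate_zero_apply, Nat.sub_zero] at h3
      have h5 : dist z (pf y) ≤ lam⁻¹ * ε0 := by
        rw [dist_comm]
        calc dist (pf y) z ≤ lam⁻¹ ^ m * ε0 := h3
          _ ≤ lam⁻¹ * ε0 := mul_le_mul_of_nonneg_right hinvm (le_of_lt hε0)
      show dist (T^[m] z) (pf y) ≤ ε0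
      calc dist (T^[m] z) (pf y) ≤ dist (T^[m] z) z + dist z (pf y) := dist_triangle _ _ _
        _ ≤ ρ + lam⁻¹ * ε0 := add_le_add hmz h5
        _ = ε0 := by rw [hρdef]; ring
    have hq : ∀ j, P (pf^[j] z) := by
      intro j
      induction j with
      | zero => exact hPz
      | succ j ih =>
        rw [Function.iterate_succ_apply' pf j z]
        exact hPstep _ ih
    have hqrel : ∀ j, T^[m] (pf^[j+1] z) = pf^[j] z := by
      intro j
      rw [Function.iterate_succ_apply' pf j z]
      exact (hstep _ (hq j)).1
    have hqsh : ∀ j, ∀ k, k ≤ m →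
        dist (T^[k] (pf^[j+1] z)) (T^[k] z) ≤ lam⁻¹ ^ (m - k) * ε0 := by
      intro j k hk
      rw [Function.iterate_succ_apply' pf j z]
      exact (hstep _ (hq j)).2 k hk
    have hcoef : ∀ k, lam⁻¹ ^ (m - k) * ε0 ≤ ε0 := by
      intro k
      calc lam⁻¹ ^ (m - k) * ε0 ≤ 1 * ε0 :=
          mul_le_mul_of_nonneg_right
            (pow_le_one₀ (le_of_lt hinv0) (le_of_lt hinv1)) (le_of_lt hε0)
        _ = ε0 := one_mul _
    have hpair : ∀ j, ∀ k, k ≤ m → dist (T^[k] (pf^[j+2] z)) (T^[k] (pf^[j+1] z)) ≤ η := by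
      intro j k hk
      have h1 := hqsh (j+1) k hk
      have h2 := hqsh j k hk
      calc dist (T^[k] (pf^[j+2] z)) (T^[k] (pf^[j+1] z))
          ≤ dist (T^[k] (pf^[j+2] z)) (T^[k] z) + dist (T^[k] (pf^[j+1] z)) (T^[k] z) := by
            rw [dist_comm (T^[k] (pf^[j+1] z))]
            exact dist_triangle _ _ _
        _ ≤ ε0 + ε0 := add_le_add (le_trans h1 (hcoef k)) (le_trans h2 (hcoef k))
        _ ≤ η := by linarith
    have hcontr : ∀ j, dist (pf^[j+2] z) (pf^[j+1] z) ≤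
        lam⁻¹ * dist (pf^[j+1] z) (pf^[j] z) := by
      intro j
      have h1 := hBE (pf^[j+2] z) (pf^[j+1] z) m (hpair j) m 0 (by omega)
      simp only [Function.iterate_zero_apply] at h1
      rw [hqrel (j+1), hqrel j] at h1
      calc dist (pf^[j+2] z) (pf^[j+1] z) ≤ lam⁻¹ ^ m * dist (pf^[j+1] z) (pf^[j] z) := h1
        _ ≤ lam⁻¹ * dist (pf^[j+1] z) (pf^[j] z) :=
            mul_le_mul_of_nonneg_right hinvm dist_nonneg
    have hgeo : ∀ j, dist (pf^[j+1] z) (pf^[j+2] z) ≤ ε0 * lam⁻¹ ^ j := by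
      intro j
      induction j with
      | zero =>
        have h2 : dist (pf^[1] z) z ≤ lam⁻¹ ^ m * ε0 := by
          have h3 := hqsh 0 0 (by omega)
          simpa using h3
        have h4 := hcontr 0
        rw [dist_comm]
        calc dist (pf^[2] z) (pf^[1] z) ≤ lam⁻¹ * dist (pf^[1] z) (pf^[0] z) := h4
          _ ≤ lam⁻¹ * (lam⁻¹ ^ m * ε0) := by
              apply mul_le_mul_of_nonneg_left _ (le_of_lt hinv0)
              simpa using h2
          _ ≤ 1 * (1 * ε0) := by
              apply mul_le_mul (le_of_lt hinv1) _ (by positivity) zero_le_one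
              apply mul_le_mul _ (le_refl _) (le_of_lt hε0) zero_le_one
              exact pow_le_one₀ (le_of_lt hinv0) (le_of_lt hinv1)
          _ = ε0 * lam⁻¹ ^ 0 := by ring
      | succ j ih =>
        have h4 := hcontr (j+1)
        rw [dist_comm]
        calc dist (pf^[j+3] z) (pf^[j+2] z) ≤ lam⁻¹ * dist (pf^[j+2] z) (pf^[j+1] z) := h4
          _ ≤ lam⁻¹ * (ε0 * lam⁻¹ ^ j) := by
              apply mul_le_mul_of_nonneg_left _ (le_of_lt hinv0)
              rw [dist_comm]
              exact ih
          _ = ε0 * lam⁻¹ ^ (j+1) := by ring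
    have hcau : CauchySeq (fun j => pf^[j+1] z) := by
      apply cauchySeq_of_le_geometric lam⁻¹ ε0 hinv1
      intro j
      exact hgeo j
    obtain ⟨p, hp⟩ := cauchySeq_tendsto_of_complete hcau
    have hTm : Continuous (T^[m]) := hcont.iterate m
    have h1 : Tendsto (fun j => T^[m] (pf^[j+1+1] z)) atTop (nhds (T^[m] p)) :=
      (hTm.tendsto p).comp (hp.comp (tendsto_add_atTop_nat 1))
    have h2 : Tendsto (fun j => T^[m] (pf^[j+1+1] z)) atTop (nhds p) := by
      have h3 : (fun j => T^[m] (pf^[j+1+1] z)) = fun j => pf^[j+1] z := by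
        funext j
        exact hqrel (j+1)
      rw [h3]
      exact hp
    have hfix : T^[m] p = p := tendsto_nhds_unique h1 h2
    refine ⟨p, hfix, fun k hk => ?_⟩
    have h3 : Tendsto (fun j => dist (T^[k] (pf^[j+1] z)) (T^[k] z)) atTop
        (nhds (dist (T^[k] p) (T^[k] z))) :=
      Tendsto.dist (((hcont.iterate k).tendsto p).comp hp) tendsto_const_nhds
    exact le_of_tendsto h3 (Eventually.of_forall (fun j => hqsh j k (le_of_lt hk)))
  ----------------------------------------------------------------
  -- L4 : periodic orbit measures
  ----------------------------------------------------------------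
  have hper : ∀ (p : X) (m : ℕ), 1 ≤ m → T^[m] p = p →
      ((m:ℝ)⁻¹ * ∑ k ∈ Finset.range m, f (T^[k] p)) ∈ S := by
    intro p m hm hfix
    have hm0 : (m : ℝ≥0∞) ≠ 0 := by
      simp only [ne_eq, Nat.cast_eq_zero]
      omega
    have hmt : (m : ℝ≥0∞) ≠ ⊤ := ENNReal.natCast_ne_top m
    refine ⟨((m : ℝ≥0∞))⁻¹ • (∑ k ∈ Finset.range m, Measure.dirac (T^[k] p)), ?_, ?_, ?_⟩
    · constructor
      rw [Measure.smul_apply, Measure.finset_sum_apply]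
      simp only [measure_univ]
      rw [Finset.sum_const, Finset.card_range, nsmul_eq_mul, mul_one, smul_eq_mul]
      exact ENNReal.inv_mul_cancel hm0 hmt
    · intro A hA
      have hTA : MeasurableSet (T ⁻¹' A) := hA.preimage hcont.measurable
      rw [Measure.smul_apply, Measure.smul_apply,
        Measure.finset_sum_apply, Measure.finset_sum_apply]
      congr 1
      have hterm : ∀ k, Measure.dirac (T^[k] p) (T ⁻¹' A) = Measure.dirac (T^[k+1] p) A := by
        intro k
        rw [Measure.dirac_apply' _ hTA, Measure.dirac_apply' _ hA]
        simp [Set.indicator_apply, Set.mem_preimage, Function.iterate_succ_apply']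
      rw [Finset.sum_congr rfl (fun k _ => hterm k)]
      have hgm : Measure.dirac (T^[m] p) A = Measure.dirac (T^[0] p) A := by
        rw [hfix]
        simp
      have hg0 : Measure.dirac (T^[0] p) A ≠ ⊤ := measure_ne_top _ _
      have h1 : (∑ k ∈ Finset.range m, Measure.dirac (T^[k+1] p) A) +
          Measure.dirac (T^[0] p) A =
          (∑ k ∈ Finset.range m, Measure.dirac (T^[k] p) A) + Measure.dirac (T^[0] p) A := by
        rw [← Finset.sum_range_succ' (fun k => Measure.dirac (T^[k] p) A) m,
          Finset.sum_range_succ (fun k => Measure.dirac (T^[k] p) A) m, hgm]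
      exact (ENNReal.add_left_inj hg0).1 h1
    · rw [integral_smul_measure]
      rw [integral_finset_sum_measure (fun k _ => hfint (Measure.dirac (T^[k] p)))]
      have h2 : ∀ k, ∫ z, f z ∂(Measure.dirac (T^[k] p)) = f (T^[k] p) := fun k =>
        integral_dirac' f _ hfc.stronglyMeasurable
      rw [Finset.sum_congr rfl (fun k _ => h2 k)]
      rw [ENNReal.toReal_inv, ENNReal.toReal_natCast, smul_eq_mul]
  ----------------------------------------------------------------
  -- packing number
  ----------------------------------------------------------------
  have htb : TotallyBounded (Set.univ : Set X) := isCompact_univ.totallyBounded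
  obtain ⟨t, htfin, htcov⟩ := Metric.totallyBounded_iff.1 htb (ρ/2) (by positivity)
  set P0 : ℕ := htfin.toFinset.card with hP0def
  have hpack : ∀ W : Finset X, (∀ a ∈ W, ∀ b ∈ W, a ≠ b → ρ < dist a b) → W.card ≤ P0 := by
    intro W hsep
    set c : X → X := fun w => if h : ∃ y ∈ t, w ∈ ball y (ρ/2) then h.choose else w with hcdef
    have hcw : ∀ w : X, c w ∈ t ∧ w ∈ ball (c w) (ρ/2) := by
      intro w
      have hw : ∃ y ∈ t, w ∈ ball y (ρ/2) := by
        have := htcov (Set.mem_univ w)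
        simpa using this
      have hcw2 : c w = hw.choose := by
        rw [hcdef]
        simp only [hw, dif_pos]
      rw [hcw2]
      exact ⟨hw.choose_spec.1, hw.choose_spec.2⟩
    apply Finset.card_le_card_of_injOn c
    · intro w _
      rw [Finset.mem_coe, Set.Finite.mem_toFinset]
      exact (hcw w).1
    · intro a ha b hb hab
      by_contra hne
      have h1 := hsep a (by exact_mod_cast ha) b (by exact_mod_cast hb) hne
      have h2 : dist a b < ρ := by
        have ha2 := (hcw a).2
        have hb2 := (hcw b).2
        rw [mem_ball] at ha2 hb2
        calc dist a b ≤ dist a (c a) + dist (c a) b := dist_triangle _ _ _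
          _ = dist a (c a) + dist b (c b) := by rw [hab, dist_comm (c b)]
          _ < ρ/2 + ρ/2 := add_lt_add ha2 hb2
          _ = ρ := by ring
      linarith
  ----------------------------------------------------------------
  -- constants
  ----------------------------------------------------------------
  set sα : ℝ := lam⁻¹ ^ α with hsαdef
  have hsα0 : 0 < sα := Real.rpow_pos_of_pos hinv0 α
  have hsα1 : sα < 1 := Real.rpow_lt_one (le_of_lt hinv0) hinv1 hα
  set θ : ℝ := sα * (1 - sα)⁻¹ with hθdef
  have hθ0 : 0 < θ := mul_pos hsα0 (inv_pos.2 (by linarith))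
  set H : ℝ := max (Mf - βs) (K * ε0 ^ α * θ) with hHdef
  have hH0 : 0 ≤ H := by
    have h1 : (0:ℝ) < K * ε0 ^ α * θ := by
      apply mul_pos (mul_pos hK (Real.rpow_pos_of_pos hε0 α)) hθ0
    exact le_trans (le_of_lt h1) (le_max_right _ _)
  have hHMf : Mf - βs ≤ H := le_max_left _ _
  have hHloop : K * ε0 ^ α * θ ≤ H := le_max_right _ _
  ----------------------------------------------------------------
  -- loop estimate via closing lemma + periodic measure
  ----------------------------------------------------------------
  have hloop : ∀ (x : X) (m : ℕ), 1 ≤ m → dist (T^[m] x) x ≤ ρ →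
      ∑ k ∈ Finset.range m, f (T^[k] x) ≤ m * βs + H := by
    intro x m hm hd
    obtain ⟨p, hfix, hsh⟩ := hclose m hm x hd
    have hβ : (m:ℝ)⁻¹ * ∑ k ∈ Finset.range m, f (T^[k] p) ≤ βs :=
      le_csSup hSbdd (hper p m hm hfix)
    have hm0 : (0:ℝ) < m := by
      exact_mod_cast Nat.lt_of_lt_of_le Nat.zero_lt_one hm
    have hsump : ∑ k ∈ Finset.range m, f (T^[k] p) ≤ m * βs := by
      have h1 : (∑ k ∈ Finset.range m, f (T^[k] p)) =
          (m:ℝ) * ((m:ℝ)⁻¹ * ∑ k ∈ Finset.range m, f (T^[k] p)) := by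
        field_simp
      rw [h1]
      exact mul_le_mul_of_nonneg_left hβ (le_of_lt hm0)
    have hdiff : ∀ k ∈ Finset.range m,
        f (T^[k] x) - f (T^[k] p) ≤ sα ^ (m - k) * (K * ε0 ^ α) := by
      intro k hk
      rw [Finset.mem_range] at hk
      have h1 : |f (T^[k] x) - f (T^[k] p)| ≤ K * dist (T^[k] x) (T^[k] p) ^ α := hfK _ _
      have h2 : dist (T^[k] x) (T^[k] p) ≤ lam⁻¹ ^ (m-k) * ε0 := by
        rw [dist_comm]
        exact hsh k hk
      have h3 : dist (T^[k] x) (T^[k] p) ^ α ≤ (lam⁻¹ ^ (m-k) * ε0) ^ α :=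
        Real.rpow_le_rpow dist_nonneg h2 (le_of_lt hα)
      have h4 : (lam⁻¹ ^ (m-k) * ε0) ^ α = sα ^ (m-k) * ε0 ^ α := by
        rw [Real.mul_rpow (by positivity) (le_of_lt hε0)]
        congr 1
        rw [← Real.rpow_natCast_mul (le_of_lt hinv0), mul_comm,
          Real.rpow_mul_natCast (le_of_lt hinv0)]
      calc f (T^[k] x) - f (T^[k] p) ≤ |f (T^[k] x) - f (T^[k] p)| := le_abs_self _
        _ ≤ K * dist (T^[k] x) (T^[k] p) ^ α := h1
        _ ≤ K * (sα ^ (m-k) * ε0 ^ α) := by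
            rw [← h4]
            exact mul_le_mul_of_nonneg_left h3 (le_of_lt hK)
        _ = sα ^ (m-k) * (K * ε0 ^ α) := by ring
    have hsumdiff : ∑ k ∈ Finset.range m, (f (T^[k] x) - f (T^[k] p)) ≤
        θ * (K * ε0 ^ α) := by
      calc ∑ k ∈ Finset.range m, (f (T^[k] x) - f (T^[k] p))
          ≤ ∑ k ∈ Finset.range m, sα ^ (m - k) * (K * ε0 ^ α) := Finset.sum_le_sum hdiff
        _ = (∑ k ∈ Finset.range m, sα ^ (m - k)) * (K * ε0 ^ α) := by
            rw [Finset.sum_mul]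
        _ ≤ (sα * (1 - sα)⁻¹) * (K * ε0 ^ α) := by
            apply mul_le_mul_of_nonneg_right (mane_geom_tail (le_of_lt hsα0) hsα1 m)
            positivity
        _ = θ * (K * ε0 ^ α) := by rw [hθdef]
    have hfinal : ∑ k ∈ Finset.range m, f (T^[k] x) =
        (∑ k ∈ Finset.range m, f (T^[k] p)) +
        ∑ k ∈ Finset.range m, (f (T^[k] x) - f (T^[k] p)) := by
      rw [← Finset.sum_add_distrib]
      apply Finset.sum_congr rfl
      intro k _
      ring
    rw [hfinal]
    have hθK : θ * (K * ε0 ^ α) = K * ε0 ^ α * θ := by ring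
    calc (∑ k ∈ Finset.range m, f (T^[k] p)) +
        ∑ k ∈ Finset.range m, (f (T^[k] x) - f (T^[k] p))
        ≤ m * βs + θ * (K * ε0 ^ α) := add_le_add hsump hsumdiff
      _ ≤ m * βs + H := by
          rw [hθK] at *
          linarith [hHloop]
  ----------------------------------------------------------------
  -- star : uniform Birkhoff bound
  ----------------------------------------------------------------
  set C : ℝ := (2 * (P0:ℝ) + 1) * H with hCdef
  have hmain : ∀ (n : ℕ) (x : X) (mm : ℕ),
      (∀ W : Finset X, (∀ w ∈ W, ∃ k, k < n ∧ T^[k] x = w) →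
        (∀ a ∈ W, ∀ b ∈ W, a ≠ b → ρ < dist a b) → W.card ≤ mm) →
      ∑ k ∈ Finset.range n, f (T^[k] x) ≤ n * βs + (2 * (mm:ℝ) + 1) * H := by
    intro n
    induction n using Nat.strong_induction_on with
    | _ n ih =>
      intro x mm hsepb
      rcases Nat.eq_zero_or_pos n with rfl | hn
      · simp only [Finset.range_zero, Finset.sum_empty, Nat.cast_zero, zero_mul, zero_add]
        positivity
      have hmm1 : 1 ≤ mm := by
        have h1 := hsepb {x} ?_ ?_
        · simpa using h1
        · intro w hw
          rw [Finset.mem_singleton] at hw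
          exact ⟨0, hn, by simp [hw]⟩
        · intro a ha b hb hab
          rw [Finset.mem_singleton] at ha hb
          exact absurd (ha.trans hb.symm) hab
      obtain ⟨mm', rfl⟩ : ∃ mm', mm = mm' + 1 := ⟨mm - 1, by omega⟩
      set J : ℕ := Nat.findGreatest (fun j => dist (T^[j] x) x ≤ ρ) (n-1) with hJdef
      have hJle : J ≤ n - 1 := by
        rw [hJdef]
        exact Nat.findGreatest_le (n-1)
      have hJP : dist (T^[J] x) x ≤ ρ := by
        have h0 : dist (T^[0] x) x ≤ ρ := by simp [le_of_lt hρ0]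
        have := Nat.findGreatest_spec (P := fun j => dist (T^[j] x) x ≤ ρ)
          (Nat.zero_le (n-1)) h0
        rwa [← hJdef] at this
      have hJg : ∀ j, J < j → j ≤ n-1 → ρ < dist (T^[j] x) x := by
        intro j h1 h2
        rw [hJdef] at h1
        have h3 := Nat.findGreatest_is_greatest (P := fun j => dist (T^[j] x) x ≤ ρ) h1 h2
        exact lt_of_not_ge h3
      rcases Nat.eq_zero_or_pos J with hJ0 | hJpos
      · -- case J = 0 : no return at all
        obtain ⟨nn, rfl⟩ : ∃ nn, n = nn + 1 := ⟨n-1, by omega⟩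
        have hsepb' : ∀ W : Finset X, (∀ w ∈ W, ∃ k, k < nn ∧ T^[k] (T x) = w) →
            (∀ a ∈ W, ∀ b ∈ W, a ≠ b → ρ < dist a b) → W.card ≤ mm' := by
          intro W hWo hWs
          have hxW : ∀ w ∈ W, ρ < dist w x := by
            intro w hw
            obtain ⟨k, hk, hkw⟩ := hWo w hw
            have h1 : T^[k+1] x = w := by
              rw [Function.iterate_succ_apply]
              exact hkw
            rw [← h1]
            exact hJg (k+1) (by omega) (by omega)
          have hxnW : x ∉ W := by
            intro hx
            have := hxW x hx
            simp at this
            linarith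
          have hcard := hsepb (insert x W) ?_ ?_
          · rw [Finset.card_insert_of_notMem hxnW] at hcard
            omega
          · intro w hw
            rcases Finset.mem_insert.1 hw with rfl | hw'
            · exact ⟨0, by omega, by simp⟩
            · obtain ⟨k, hk, hkw⟩ := hWo w hw'
              exact ⟨k+1, by omega, by rw [Function.iterate_succ_apply]; exact hkw⟩
          · intro a ha b hb hab
            rcases Finset.mem_insert.1 ha with rfl | ha'
            · rcases Finset.mem_insert.1 hb with rfl | hb'
              · exact absurd rfl hab
              · rw [dist_comm]
                exact hxW b hb'
            · rcases Finset.mem_insert.1 hb with rfl | hb'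
              · exact hxW a ha'
              · exact hWs a ha' b hb' hab
        have ihtail := ih nn (by omega) (T x) mm' hsepb'
        have hsplit : ∑ k ∈ Finset.range (nn+1), f (T^[k] x) =
            (∑ k ∈ Finset.range nn, f (T^[k] (T x))) + f x := by
          rw [Finset.sum_range_succ' (fun k => f (T^[k] x)) nn]
          simp only [Function.iterate_succ_apply, Function.iterate_zero_apply]
        rw [hsplit]
        have hfx : f x ≤ βs + H := by
          have := hMf x
          linarith [hHMf]
        push_cast
        push_cast at ihtail
        linarith [hH0]
      · -- case J ≥ 1 : close the loop [0, J)
        have hJn : J + 1 ≤ n := by omega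
        set R : ℕ := n - (J+1) with hRdef
        have hnJR : n = J + 1 + R := by omega
        have hloopJ : ∑ k ∈ Finset.range J, f (T^[k] x) ≤ J * βs + H := hloop x J hJpos hJP
        have hsepb' : ∀ W : Finset X, (∀ w ∈ W, ∃ k, k < R ∧ T^[k] (T^[J+1] x) = w) →
            (∀ a ∈ W, ∀ b ∈ W, a ≠ b → ρ < dist a b) → W.card ≤ mm' := by
          intro W hWo hWs
          have hxW : ∀ w ∈ W, ρ < dist w x := by
            intro w hw
            obtain ⟨k, hk, hkw⟩ := hWo w hw
            have h1 : T^[k + (J+1)] x = w := by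
              rw [Function.iterate_add_apply]
              exact hkw
            rw [← h1]
            exact hJg (k + (J+1)) (by omega) (by omega)
          have hxnW : x ∉ W := by
            intro hx
            have := hxW x hx
            simp at this
            linarith
          have hcard := hsepb (insert x W) ?_ ?_
          · rw [Finset.card_insert_of_notMem hxnW] at hcard
            omega
          · intro w hw
            rcases Finset.mem_insert.1 hw with rfl | hw'
            · exact ⟨0, by omega, by simp⟩
            · obtain ⟨k, hk, hkw⟩ := hWo w hw'
              refine ⟨k + (J+1), by omega, ?_⟩
              rw [Function.iterate_add_apply]
              exact hkw
          · intro a ha b hb hab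
            rcases Finset.mem_insert.1 ha with rfl | ha'
            · rcases Finset.mem_insert.1 hb with rfl | hb'
              · exact absurd rfl hab
              · rw [dist_comm]
                exact hxW b hb'
            · rcases Finset.mem_insert.1 hb with rfl | hb'
              · exact hxW a ha'
              · exact hWs a ha' b hb' hab
        have ihtail := ih R (by omega) (T^[J+1] x) mm' hsepb'
        have hfJ : f (T^[J] x) ≤ βs + H := by
          have := hMf (T^[J] x)
          linarith [hHMf]
        have hsplit : ∑ k ∈ Finset.range n, f (T^[k] x) =
            (∑ k ∈ Finset.range J, f (T^[k] x)) +
            (f (T^[J] x) + ∑ k ∈ Finset.range R, f (T^[k] (T^[J+1] x))) := by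
          rw [← Finset.sum_range_add_sum_Ico (fun k => f (T^[k] x)) (show J ≤ n by omega)]
          congr 1
          rw [Finset.sum_Ico_eq_sum_range]
          have hnJ : n - J = R + 1 := by omega
          have h5 : ∀ i : ℕ, f (T^[J + (i+1)] x) = f (T^[i] (T^[J+1] x)) := by
            intro i
            congr 1
            rw [show J + (i+1) = i + (J+1) by omega, Function.iterate_add_apply]
          rw [hnJ, Finset.sum_range_succ' (fun i => f (T^[J + i] x)) R]
          simp only [h5, Nat.add_zero]
          rw [add_comm]
        rw [hsplit]
        push_cast
        push_cast at ihtail hloopJ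
        have hnβ : (n:ℝ) * βs = (J:ℝ) * βs + βs + (R:ℝ) * βs := by
          have hncast : (n:ℝ) = (J:ℝ) + 1 + (R:ℝ) := by exact_mod_cast hnJR
          rw [hncast]
          ring
        linarith [hH0]
  have hstar : ∀ (n : ℕ) (z : X),
      ∑ k ∈ Finset.range n, f (T^[k] z) ≤ n * βs + C := by
    intro n z
    have h1 := hmain n z P0 (fun W _ hWs => hpack W hWs)
    calc ∑ k ∈ Finset.range n, f (T^[k] z) ≤ n * βs + (2 * (P0:ℝ) + 1) * H := h1
      _ = n * βs + C := by rw [hCdef]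
  ----------------------------------------------------------------
  -- the subaction
  ----------------------------------------------------------------
  set G : ℝ := max (K * θ) (max ((C + Mf - βs) / ε0 ^ α) 1) with hGdef
  have hG1 : (1:ℝ) ≤ G := le_trans (le_max_right _ _) (le_max_right _ _)
  have hG0 : (0:ℝ) < G := lt_of_lt_of_le one_pos hG1
  have hGθ : K * θ ≤ G := le_max_left _ _
  have hGC : C + Mf - βs ≤ G * ε0 ^ α := by
    have h1 : (C + Mf - βs) / ε0 ^ α ≤ G :=
      le_trans (le_max_left _ _) (le_max_right _ _)
    rw [div_le_iff₀ (Real.rpow_pos_of_pos hε0 α)] at h1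
    linarith
  set AW : X → Set ℝ := fun x => {e | ∃ (n : ℕ) (z : X),
      e = (∑ k ∈ Finset.range n, f (T^[k] z)) - n * βs - G * dist z x ^ α} with hAWdef
  have hAW0 : ∀ x, (0:ℝ) ∈ AW x := by
    intro x
    refine ⟨0, x, ?_⟩
    simp [Real.zero_rpow (ne_of_gt hα)]
  have hAWbdd : ∀ x, ∀ e ∈ AW x, e ≤ C := by
    intro x e he
    obtain ⟨n, z, rfl⟩ := he
    have h1 := hstar n z
    have h2 : 0 ≤ G * dist z x ^ α := by
      apply mul_nonneg (le_of_lt hG0) (Real.rpow_nonneg dist_nonneg α)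
    linarith
  have hbdd : ∀ x, BddAbove (AW x) := fun x => ⟨C, fun e he => hAWbdd x e he⟩
  set Wf : X → ℝ := fun x => sSup (AW x) with hWdef
  have hW0 : ∀ x, 0 ≤ Wf x := fun x => le_csSup (hbdd x) (hAW0 x)
  have hWHold : ∀ x y : X, Wf x ≤ Wf y + G * dist x y ^ α := by
    intro x y
    apply csSup_le ⟨0, hAW0 x⟩
    intro e he
    obtain ⟨n, z, rfl⟩ := he
    have h1 : (∑ k ∈ Finset.range n, f (T^[k] z)) - n * βs - G * dist z y ^ α ≤ Wf y :=
      le_csSup (hbdd y) ⟨n, z, rfl⟩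
    have h3 := mane_rpow_tri (le_of_lt hα) hα1 (dist z x) (dist x y) (dist z y)
      dist_nonneg dist_nonneg (dist_triangle z x y) dist_nonneg
    nlinarith [hG0]
  have hWdist : ∀ x y : X, |Wf x - Wf y| ≤ G * dist x y ^ α := by
    intro x y
    rw [abs_sub_le_iff]
    constructor
    · have h1 := hWHold x y
      linarith
    · have h1 := hWHold y x
      rw [dist_comm] at h1
      linarith
  refine ⟨fun x => -(Wf x), ⟨G, hG0, fun x y => ?_⟩, ?_⟩
  · rw [show -(Wf x) - -(Wf y) = -(Wf x - Wf y) by ring, abs_neg]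
    exact hWdist x y
  intro x
  show f x + -(Wf x) - -(Wf (T x)) ≤ βs
  have hkey : Wf (T x) ≤ Wf x + (βs - f x) := by
    apply csSup_le ⟨0, hAW0 (T x)⟩
    intro e he
    obtain ⟨n, z, rfl⟩ := he
    by_cases hnear : dist (T x) z ≤ ε0
    · obtain ⟨y, hy1, hy2⟩ := hbranch x z hnear
      have helt : (∑ k ∈ Finset.range (n+1), f (T^[k] y)) - ((n:ℝ)+1) * βs
          - G * dist y x ^ α ≤ Wf x := le_csSup (hbdd x) ⟨n+1, y, by push_cast; ring⟩
      have hsum : ∑ k ∈ Finset.range (n+1), f (T^[k] y) =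
          (∑ k ∈ Finset.range n, f (T^[k] z)) + f y := by
        rw [Finset.sum_range_succ' (fun k => f (T^[k] y)) n]
        simp only [Function.iterate_succ_apply, hy1, Function.iterate_zero_apply]
      rw [hsum] at helt
      have hd1 : dist y x ^ α ≤ sα * dist (T x) z ^ α := by
        have h1 : dist y x ≤ lam⁻¹ * dist (T x) z := by
          rw [dist_comm]
          exact hy2
        have h2 := Real.rpow_le_rpow dist_nonneg h1 (le_of_lt hα)
        rwa [Real.mul_rpow (le_of_lt hinv0) dist_nonneg] at h2
      have hfxy : f x - f y ≤ K * dist y x ^ α := by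
        have h1 := hfK x y
        rw [dist_comm x y] at h1
        exact le_trans (le_abs_self _) h1
      have hkey2 : (K + G) * sα ≤ G := by
        have h2 : (0:ℝ) < 1 - sα := by linarith
        have h1 : K * (sα * (1 - sα)⁻¹) ≤ G := by
          rw [← hθdef]
          exact hGθ
        have h4 : K * (sα * (1 - sα)⁻¹) * (1 - sα) ≤ G * (1 - sα) :=
          mul_le_mul_of_nonneg_right h1 (le_of_lt h2)
        have h5 : K * (sα * (1 - sα)⁻¹) * (1 - sα) = K * sα := by
          field_simp
        nlinarith [h4, h5]
      have hdyx : 0 ≤ dist y x ^ α := Real.rpow_nonneg dist_nonneg α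
      have hdTz : 0 ≤ dist (T x) z ^ α := Real.rpow_nonneg dist_nonneg α
      -- (K + G) * dist y x ^ α ≤ (K+G) * sα * dist (T x) z ^ α ≤ G * dist (T x) z ^ α
      have hchain : (K + G) * dist y x ^ α ≤ G * dist (T x) z ^ α := by
        calc (K + G) * dist y x ^ α ≤ (K + G) * (sα * dist (T x) z ^ α) :=
            mul_le_mul_of_nonneg_left hd1 (by linarith)
          _ = ((K + G) * sα) * dist (T x) z ^ α := by ring
          _ ≤ G * dist (T x) z ^ α := mul_le_mul_of_nonneg_right hkey2 hdTz
      have hdcomm : dist z (T x) = dist (T x) z := dist_comm _ _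
      rw [hdcomm]
      push_cast at helt ⊢
      linarith [hchain, hfxy, helt]
    · -- far case
      push_neg at hnear
      have h1 : (∑ k ∈ Finset.range n, f (T^[k] z)) - n * βs ≤ C := by
        have := hstar n z
        linarith
      have h2 : ε0 ^ α ≤ dist (T x) z ^ α :=
        Real.rpow_le_rpow (le_of_lt hε0) (le_of_lt hnear) (le_of_lt hα)
      have h3 : G * ε0 ^ α ≤ G * dist (T x) z ^ α :=
        mul_le_mul_of_nonneg_left h2 (le_of_lt hG0)
      have h4 := hW0 x
      have h5 := hMf x
      have hdcomm : dist z (T x) = dist (T x) z := dist_comm _ _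
      rw [hdcomm]
      linarith [hGC]
  linarith [hkey]
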